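/- Let G be a graph, C a longest cycle of G with a fixed orientation, H a component of G − V(C), and w, z two distinct vertices of C each having a neighbor in H. Let w₁ be a neighbor of w⁺ on C. If w, z, w₁ appear in this order along the orientation of C, then z⁺ is not adjacent to w₁⁺. -/

import Mathlib

open SimpleGraph

/-- The disjoint union of an edge (on vertices 0,1) and `k` isolated vertices. -/
def K2uK (k : ℕ) : SimpleGraph (Fin (k + 2)) :=
  SimpleGraph.fromRel (fun a b => a = 0 ∧ b = 1)

/-- `G` contains no induced copy of `H`. -/
def HFree {α β : Type*} (H : SimpleGraph α) (G : SimpleGraph β) : Prop :=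
  IsEmpty (H ↪g G)

/-- The number of connected components of a graph. -/
noncomputable def numComp {V : Type*} (G : SimpleGraph V) : ℕ :=
  Nat.card G.ConnectedComponent

/-- `S` is a cut set of `G`: removing `S` leaves at least two components. -/
def IsCutSet {V : Type*} (G : SimpleGraph V) (S : Set V) : Prop :=
  2 ≤ numComp (G.induce (Sᶜ : Set V))

/-- `f : ZMod n → V` describes an oriented cycle of length `n` in `G`. -/
structure IsOrientedCycle {V : Type*} (G : SimpleGraph V) (n : ℕ) (f : ZMod n → V) :
    Prop where
  three_le : 3 ≤ n
  inj : Function.Injective f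
  adj : ∀ i, G.Adj (f i) (f (i + 1))

/-- `f` is a longest cycle of `G`. -/
def IsLongestCycle {V : Type*} (G : SimpleGraph V) (n : ℕ) (f : ZMod n → V) : Prop :=
  IsOrientedCycle G n f ∧ ∀ (m : ℕ) (g : ZMod m → V), IsOrientedCycle G m g → m ≤ n

lemma natCast_inj_bounds {n c₁ c₂ : ℕ} (h1 : 1 ≤ c₁) (h1' : c₁ ≤ n) (h2 : 1 ≤ c₂)
    (h2' : c₂ ≤ n) (h : (c₁ : ZMod n) = c₂) : c₁ = c₂ := by
  have hmod : c₁ % n = c₂ % n := (ZMod.natCast_eq_natCast_iff _ _ _).mp h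
  rcases eq_or_lt_of_le h1' with rfl | hc1
  · rw [Nat.mod_self] at hmod
    rcases eq_or_lt_of_le h2' with rfl | hc2
    · rfl
    · rw [Nat.mod_eq_of_lt hc2] at hmod; omega
  · rw [Nat.mod_eq_of_lt hc1] at hmod
    rcases eq_or_lt_of_le h2' with rfl | hc2
    · rw [Nat.mod_self] at hmod; omega
    · rw [Nat.mod_eq_of_lt hc2] at hmod; omega

lemma chain'_map_range {α : Type*} (R : α → α → Prop) (g : ℕ → α) (m : ℕ)
    (h : ∀ t, t + 1 < m → R (g t) (g (t + 1))) :
    List.Chain' R ((List.range m).map g) := by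
  unfold List.Chain'
  rw [List.isChain_map]
  match m with
  | 0 => simp
  | s + 1 =>
    rw [List.isChain_range_succ]
    intro t ht
    exact h t (by omega)

lemma exists_cycle_of_list {V : Type*} (G : SimpleGraph V) (L : List V)
    (hne : L ≠ []) (h3 : 3 ≤ L.length) (hnd : L.Nodup) (hch : List.Chain' G.Adj L)
    (hwrap : G.Adj (L.getLast hne) (L.head hne)) :
    ∃ g : ZMod L.length → V, IsOrientedCycle G L.length g := by
  haveI : NeZero L.length := ⟨by omega⟩
  haveI : Fact (1 < L.length) := ⟨by omega⟩
  refine ⟨fun x => L.get ⟨x.val, ZMod.val_lt x⟩, h3, ?_, ?_⟩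
  · intro x y hxy
    have := List.nodup_iff_injective_get.mp hnd hxy
    have : x.val = y.val := congrArg Fin.val this
    exact ZMod.val_injective _ this
  · intro x
    have hx : x.val < L.length := ZMod.val_lt x
    have hx1 : (x + 1).val = (x.val + 1) % L.length := by
      rw [ZMod.val_add, ZMod.val_one]
    by_cases hlt : x.val + 1 < L.length
    · have hv : (x+1).val = x.val + 1 := by rw [hx1, Nat.mod_eq_of_lt hlt]
      have := List.isChain_iff_getElem.mp hch x.val (by omega)
      simpa [hv] using this
    · have hv : (x+1).val = 0 := by
        have hxe : x.val + 1 = L.length := by omega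
        rw [hx1, hxe, Nat.mod_self]
      have h1 : L.get ⟨(x+1).val, ZMod.val_lt _⟩ = L.head hne := by
        simp [hv, List.get_eq_getElem, List.getElem_zero]
      have h2 : L.get ⟨x.val, ZMod.val_lt _⟩ = L.getLast hne := by
        have hxe : x.val = L.length - 1 := by omega
        simp [hxe, List.get_eq_getElem, List.getLast_eq_getElem]
      simp only [h1, h2]
      exact hwrap

theorem stmt_16 {V : Type*} (G : SimpleGraph V) (n : ℕ) (f : ZMod n → V)
    (hC : IsLongestCycle G n f)
    (H : (G.induce ((Set.range f)ᶜ : Set V)).ConnectedComponent) (i j k : ZMod n)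
    (hne : f i ≠ f j)
    (hw : ∃ h ∈ H.supp, G.Adj (f i) ↑h) (hz : ∃ h ∈ H.supp, G.Adj (f j) ↑h)
    (hw1 : G.Adj (f (i + 1)) (f k))
    (horder : ∃ a b : ℕ, 0 < a ∧ a < b ∧ b < n ∧
      j = i + (a : ZMod n) ∧ k = i + (b : ZMod n)) :
    ¬ G.Adj (f (j + 1)) (f (k + 1)) := by
  intro hadj
  classical
  obtain ⟨a, b, ha, hab, hbn, hj, hk⟩ := horder
  obtain ⟨h₁, hh₁, hadj₁⟩ := hw
  obtain ⟨h₂, hh₂, hadj₂⟩ := hz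
  have n3 : 3 ≤ n := hC.1.three_le
  have finj := hC.1.inj
  have fadj := hC.1.adj
  -- the path in H from h₁ to h₂
  have hreach : (G.induce ((Set.range f)ᶜ : Set V)).Reachable h₁ h₂ :=
    ConnectedComponent.exact (by
      rw [ConnectedComponent.mem_supp_iff] at hh₁ hh₂
      rw [hh₁, hh₂])
  obtain ⟨W⟩ := hreach
  obtain ⟨P, hP⟩ := W.toPath
  set ps : List V := P.support.map Subtype.val with hps
  -- offset function for the reordered cycle
  set ofs : ℕ → ℕ := fun t => if t < a then a - t else if t < b then a + b - t else t + 1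
    with hofs
  set cyc : List V := (List.range n).map (fun t => f (i + (ofs t : ZMod n))) with hcyc
  set L : List V := ps ++ cyc with hL
  have hpslen : 1 ≤ ps.length := by
    rw [hps, List.length_map]
    exact List.length_pos_iff.mpr P.support_ne_nil
  have hpsne : ps ≠ [] := by
    intro h; rw [h] at hpslen; simp at hpslen
  have hLlen : L.length = ps.length + n := by simp [hL, hcyc]
  have hLne : L ≠ [] := by
    simp [hL, hpsne]
  -- basic step adjacency
  have stepcast : ∀ c : ℕ, G.Adj (f (i + ((c : ℕ) : ZMod n))) (f (i + ((c + 1 : ℕ) : ZMod n))) := by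
    intro c
    have e : (((c + 1 : ℕ)) : ZMod n) = (c : ZMod n) + 1 := by push_cast; ring
    rw [e, ← add_assoc]
    exact fadj (i + c)
  -- bounds for ofs
  have hofsb : ∀ t, t < n → 1 ≤ ofs t ∧ ofs t ≤ n := by
    intro t ht
    simp only [hofs]
    split_ifs <;> omega
  -- chain on cyc
  have hchcyc : List.Chain' G.Adj cyc := by
    apply chain'_map_range
    intro t ht
    by_cases h1 : t + 1 < a
    · have e1 : ofs t = (a - (t + 1)) + 1 := by simp only [hofs]; split_ifs <;> omega
      have e2 : ofs (t + 1) = a - (t + 1) := by simp only [hofs]; split_ifs <;> omega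
      rw [e1, e2]
      exact (stepcast (a - (t + 1))).symm
    · by_cases h2 : t + 1 = a
      · have e1 : ofs t = 1 := by simp only [hofs]; split_ifs <;> omega
        have e2 : ofs (t + 1) = b := by simp only [hofs]; split_ifs <;> omega
        rw [e1, e2]
        have : f (i + ((1 : ℕ) : ZMod n)) = f (i + 1) := by norm_num
        rw [this, ← hk]
        exact hw1
      · by_cases h3 : t + 1 < b
        · have e1 : ofs t = (a + b - (t + 1)) + 1 := by simp only [hofs]; split_ifs <;> omega
          have e2 : ofs (t + 1) = a + b - (t + 1) := by simp only [hofs]; split_ifs <;> omega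
          rw [e1, e2]
          exact (stepcast (a + b - (t + 1))).symm
        · by_cases h4 : t + 1 = b
          · have e1 : ofs t = a + 1 := by simp only [hofs]; split_ifs <;> omega
            have e2 : ofs (t + 1) = b + 1 := by simp only [hofs]; split_ifs <;> omega
            rw [e1, e2]
            have ej : f (i + ((a + 1 : ℕ) : ZMod n)) = f (j + 1) := by
              rw [hj]; push_cast; ring_nf
            have ek : f (i + ((b + 1 : ℕ) : ZMod n)) = f (k + 1) := by
              rw [hk]; push_cast; ring_nf
            rw [ej, ek]
            exact hadj
          · have e1 : ofs t = t + 1 := by simp only [hofs]; split_ifs <;> omega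
            have e2 : ofs (t + 1) = (t + 1) + 1 := by simp only [hofs]; split_ifs <;> omega
            rw [e1, e2]
            exact stepcast (t + 1)
  -- chain on ps
  have hchps : List.Chain' G.Adj ps := by
    rw [hps]
    unfold List.Chain'
    rw [List.isChain_map]
    exact P.isChain_adj_support.imp (fun x y hxy => hxy)
  -- endpoints of ps and cyc
  have hcyclen : cyc.length = n := by simp [hcyc]
  have hcycne : cyc ≠ [] := by
    intro h; rw [h] at hcyclen; simp at hcyclen; omega
  have hpslast : ps.getLast hpsne = (h₂ : V) := by
    have h' : P.support.map (Subtype.val) ≠ [] := hpsne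
    calc ps.getLast hpsne = (P.support.map Subtype.val).getLast h' := rfl
    _ = (P.support.getLast (by simpa using h') : V) := List.getLast_map _
    _ = (h₂ : V) := by rw [P.getLast_support]
  have hpshead : ps.head hpsne = (h₁ : V) := by
    have h' : P.support.map (Subtype.val) ≠ [] := hpsne
    calc ps.head hpsne = (P.support.map Subtype.val).head h' := rfl
    _ = (P.support.head (by simpa using h') : V) := List.head_map _
    _ = (h₁ : V) := by rw [P.head_support]
  have hcychead : cyc.head hcycne = f j := by
    rw [List.head_eq_getElem]
    simp only [hcyc, List.getElem_map, List.getElem_range]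
    have e : ofs 0 = a := by simp only [hofs]; split_ifs <;> omega
    rw [e, hj]
  have hcyclast : cyc.getLast hcycne = f i := by
    rw [List.getLast_eq_getElem]
    simp only [hcyc, List.length_map, List.length_range, List.getElem_map, List.getElem_range]
    have e : ofs (n - 1) = n := by simp only [hofs]; split_ifs <;> omega
    rw [e]
    simp
  -- chain on L
  have hchL : List.Chain' G.Adj L := by
    rw [hL]
    unfold List.Chain'
    rw [List.isChain_append]
    refine ⟨hchps, hchcyc, ?_⟩
    intro x hx y hy
    rw [List.getLast?_eq_getLast hpsne, Option.mem_some_iff] at hx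
    rw [List.head?_eq_head hcycne, Option.mem_some_iff] at hy
    rw [← hx, ← hy, hpslast, hcychead]
    exact hadj₂.symm
  -- nodup
  have hndps : ps.Nodup := by
    rw [hps]
    exact hP.support_nodup.map Subtype.val_injective
  have hndcyc : cyc.Nodup := by
    rw [hcyc]
    refine List.Nodup.map_on ?_ List.nodup_range
    intro t₁ ht₁ t₂ ht₂ hft
    rw [List.mem_range] at ht₁ ht₂
    have h₁b := hofsb t₁ ht₁
    have h₂b := hofsb t₂ ht₂
    have := finj hft
    have : ((ofs t₁ : ℕ) : ZMod n) = ((ofs t₂ : ℕ) : ZMod n) := by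
      have := add_left_cancel this
      exact this
    have := natCast_inj_bounds h₁b.1 h₁b.2 h₂b.1 h₂b.2 this
    revert this
    simp only [hofs]
    split_ifs <;> omega
  have hdisj : List.Disjoint ps cyc := by
    intro x hxps hxcyc
    rw [hps, List.mem_map] at hxps
    obtain ⟨s, _, rfl⟩ := hxps
    rw [hcyc, List.mem_map] at hxcyc
    obtain ⟨t, _, ht⟩ := hxcyc
    exact s.2 ⟨i + (ofs t : ZMod n), ht⟩
  have hndL : L.Nodup := by
    rw [hL, List.nodup_append]
    exact ⟨hndps, hndcyc, fun x hx y hy hxy => hdisj hx (hxy ▸ hy)⟩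
  -- wrap-around edge
  have hwrap : G.Adj (L.getLast hLne) (L.head hLne) := by
    have e1 : L.getLast hLne = f i :=
      (List.getLast_append_of_ne_nil _ hcycne).trans hcyclast
    have e2 : L.head hLne = (h₁ : V) :=
      (List.head_append_left hpsne).trans hpshead
    rw [e1, e2]
    exact hadj₁
  -- conclude
  obtain ⟨g, hg⟩ := exists_cycle_of_list G L hLne (by omega) hndL hchL hwrap
  have := hC.2 L.length g hg
  omega
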